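/- arXiv:1709.03700 — 3 statements merged into one kernel-verified Lean document; each statement's English description precedes it below -/
import Mathlib

section
/- Let P be a dcpo such that every proper nonempty irreducible Scott closed subset F of P is either a down-linear element of the poset Irr_σ(P) of nonempty irreducible Scott closed sets, or is the supremum in Irr_σ(P) of a directed family of down-linear elements. Then P is C_σ-unique: for any dcpo Q, if C_σ(P) ≅ C_σ(Q) as lattices, then P ≅ Q as posets. -/
/-- A directed complete poset. -/
def Dcpo (P : Type*) [PartialOrder P] : Prop :=
  ∀ D : Set P, D.Nonempty → DirectedOn (· ≤ ·) D → ∃ a, IsLUB D a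

/-- A Scott closed set: a lower set closed under suprema of directed subsets. -/
def ScottClosed {P : Type*} [PartialOrder P] (A : Set P) : Prop :=
  IsLowerSet A ∧ ∀ D ⊆ A, D.Nonempty → DirectedOn (· ≤ ·) D → ∀ a, IsLUB D a → a ∈ A

/-- A nonempty irreducible Scott closed set. -/
def IrrClosed {P : Type*} [PartialOrder P] (A : Set P) : Prop :=
  A.Nonempty ∧ ScottClosed A ∧
    ∀ F₁ F₂ : Set P, ScottClosed F₁ → ScottClosed F₂ → A ⊆ F₁ ∪ F₂ → A ⊆ F₁ ∨ A ⊆ F₂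

/-- The lattice `C_σ(P)` of Scott closed subsets, ordered by inclusion. -/
abbrev Cσ (P : Type*) [PartialOrder P] := {A : Set P // ScottClosed A}

/-- The poset `Irr_σ(P)` of nonempty irreducible Scott closed subsets. -/
abbrev Irrσ (P : Type*) [PartialOrder P] := {A : Set P // IrrClosed A}

/-- An element is down-linear if its principal downset is a chain. -/
def DownLinear {P : Type*} [PartialOrder P] (a : P) : Prop :=
  IsChain (· ≤ ·) (Set.Iic a)

/-- A dcpo `P` is `C_σ`-unique if every dcpo `Q` with `C_σ(Q) ≅ C_σ(P)` is order
isomorphic to `P`. -/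
def CσUnique (P : Type*) [PartialOrder P] : Prop :=
  ∀ (Q : Type*) [PartialOrder Q], Dcpo Q → Nonempty (Cσ P ≃o Cσ Q) → Nonempty (P ≃o Q)

section Aux

open Set

variable {R : Type*} [PartialOrder R]

lemma scottClosed_Iic (x : R) : ScottClosed (Set.Iic x) := by
  refine ⟨isLowerSet_Iic x, ?_⟩
  intro D hD _ _ a ha
  exact ha.2 fun d hd => hD hd

lemma irrClosed_Iic (x : R) : IrrClosed (Set.Iic x) := by
  refine ⟨⟨x, le_refl x⟩, scottClosed_Iic x, ?_⟩
  intro F₁ F₂ h₁ h₂ hsub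
  rcases hsub (le_refl x : x ∈ Set.Iic x) with hx | hx
  · exact Or.inl fun y hy => h₁.1 hy hx
  · exact Or.inr fun y hy => h₂.1 hy hx

lemma scottClosed_empty : ScottClosed (∅ : Set R) := by
  refine ⟨fun _ _ _ h => h, ?_⟩
  intro D hD hne _ a _
  rcases hne with ⟨d, hd⟩
  exact absurd (hD hd) (Set.notMem_empty d)

lemma scottClosed_univ : ScottClosed (Set.univ : Set R) :=
  ⟨fun _ _ _ _ => trivial, fun _ _ _ _ _ _ => trivial⟩

lemma cofinal_lub {A D : Set R} (hA : ScottClosed A)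
    (hdir : DirectedOn (· ≤ ·) D) {a : R} (ha : IsLUB D a)
    (hcof : ∀ d ∈ D, ∃ e ∈ D ∩ A, d ≤ e) (hne : D.Nonempty) : a ∈ A := by
  have hne' : (D ∩ A).Nonempty := by
    rcases hne with ⟨d, hd⟩
    rcases hcof d hd with ⟨e, he, _⟩
    exact ⟨e, he⟩
  have hdir' : DirectedOn (· ≤ ·) (D ∩ A) := by
    intro x hx y hy
    rcases hdir x hx.1 y hy.1 with ⟨z, hz, hxz, hyz⟩
    rcases hcof z hz with ⟨e, he, hze⟩
    exact ⟨e, he, hxz.trans hze, hyz.trans hze⟩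
  have hlub : IsLUB (D ∩ A) a := by
    constructor
    · exact fun d hd => ha.1 hd.1
    · intro u hu
      refine ha.2 fun d hd => ?_
      rcases hcof d hd with ⟨e, he, hde⟩
      exact hde.trans (hu he)
  exact hA.2 (D ∩ A) (fun x hx => hx.2) hne' hdir' a hlub

lemma scottClosed_union {A B : Set R} (hA : ScottClosed A) (hB : ScottClosed B) :
    ScottClosed (A ∪ B) := by
  refine ⟨hA.1.union hB.1, ?_⟩
  intro D hD hne hdir a ha
  by_cases hcof : ∀ d ∈ D, ∃ e ∈ D ∩ A, d ≤ e
  · exact Or.inl (cofinal_lub hA hdir ha hcof hne)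
  · push_neg at hcof
    rcases hcof with ⟨d₁, hd₁, hd₁'⟩
    refine Or.inr (cofinal_lub hB hdir ha ?_ hne)
    intro d hd
    rcases hdir d hd d₁ hd₁ with ⟨z, hz, hdz, hd₁z⟩
    rcases hD hz with hzA | hzB
    · exact absurd hd₁z (hd₁' z ⟨hz, hzA⟩)
    · exact ⟨z, ⟨hz, hzB⟩, hdz⟩

/-- Order-theoretic characterization of irreducibility inside `Cσ`. -/
def OrdIrr {R : Type*} [PartialOrder R] (A : Cσ R) : Prop :=
  (¬ ∀ B : Cσ R, A ≤ B) ∧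
    ∀ F₁ F₂ L : Cσ R, IsLUB {F₁, F₂} L → A ≤ L → A ≤ F₁ ∨ A ≤ F₂

lemma isLUB_pair_union (F₁ F₂ : Cσ R) :
    IsLUB ({F₁, F₂} : Set (Cσ R)) ⟨F₁.1 ∪ F₂.1, scottClosed_union F₁.2 F₂.2⟩ := by
  constructor
  · intro G hG
    have hG' : G = F₁ ∨ G = F₂ := hG
    rcases hG' with h | h <;> rw [h]
    · exact (Set.subset_union_left : F₁.1 ⊆ F₁.1 ∪ F₂.1)
    · exact (Set.subset_union_right : F₂.1 ⊆ F₁.1 ∪ F₂.1)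
  · intro u hu
    have h1 : F₁ ≤ u := hu (by exact Or.inl rfl)
    have h2 : F₂ ≤ u := hu (by exact Or.inr rfl)
    exact Set.union_subset h1 h2

lemma ordIrr_iff (A : Cσ R) : OrdIrr A ↔ IrrClosed A.1 := by
  constructor
  · rintro ⟨hne, hprime⟩
    have hA : A.1.Nonempty := by
      by_contra h
      rw [Set.not_nonempty_iff_eq_empty] at h
      exact hne fun B => by rw [show A ≤ B ↔ A.1 ⊆ B.1 from Iff.rfl, h]; exact Set.empty_subset _
    refine ⟨hA, A.2, ?_⟩
    intro F₁ F₂ h₁ h₂ hsub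
    exact hprime ⟨F₁, h₁⟩ ⟨F₂, h₂⟩ _ (isLUB_pair_union ⟨F₁, h₁⟩ ⟨F₂, h₂⟩) hsub
  · rintro ⟨hA, _, hirr⟩
    constructor
    · intro h
      have := h ⟨∅, scottClosed_empty⟩
      rcases hA with ⟨x, hx⟩
      exact absurd (this hx) (Set.notMem_empty x)
    · intro F₁ F₂ L hL hle
      have hLeq : L = ⟨F₁.1 ∪ F₂.1, scottClosed_union F₁.2 F₂.2⟩ :=
        hL.unique (isLUB_pair_union F₁ F₂)
      have : A.1 ⊆ F₁.1 ∪ F₂.1 := by rw [hLeq] at hle; exact hle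
      exact hirr F₁.1 F₂.1 F₁.2 F₂.2 this

section Transfer

variable {P' Q' : Type*} [PartialOrder P'] [PartialOrder Q']

lemma ordIrr_map_of (Φ : Cσ P' ≃o Cσ Q') {A : Cσ P'} (h : OrdIrr A) : OrdIrr (Φ A) := by
  obtain ⟨hne, hprime⟩ := h
  constructor
  · intro h'
    exact hne fun B => by
      have := h' (Φ B)
      exact Φ.le_iff_le.1 this
  · intro G₁ G₂ L hL hle
    have hL' : IsLUB {Φ.symm G₁, Φ.symm G₂} (Φ.symm L) := by
      have himg : Φ '' {Φ.symm G₁, Φ.symm G₂} = {G₁, G₂} := by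
        rw [Set.image_pair]; simp
      have := (Φ.isLUB_image' (s := {Φ.symm G₁, Φ.symm G₂}) (x := Φ.symm L))
      rw [himg, Φ.apply_symm_apply] at this
      exact this.1 hL
    have hle' : A ≤ Φ.symm L := by
      rw [← Φ.symm_apply_apply A]
      exact Φ.symm.monotone hle
    rcases hprime _ _ _ hL' hle' with h | h
    · left
      have := Φ.monotone h
      rwa [Φ.apply_symm_apply] at this
    · right
      have := Φ.monotone h
      rwa [Φ.apply_symm_apply] at this

lemma ordIrr_map (Φ : Cσ P' ≃o Cσ Q') (A : Cσ P') : OrdIrr (Φ A) ↔ OrdIrr A := by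
  constructor
  · intro h
    have := ordIrr_map_of Φ.symm h
    rwa [Φ.symm_apply_apply] at this
  · exact ordIrr_map_of Φ

lemma irrClosed_of_cσ (Φ : Cσ P' ≃o Cσ Q') (F : Irrσ P') :
    IrrClosed (Φ ⟨F.1, F.2.2.1⟩).1 :=
  (ordIrr_iff _).1 (ordIrr_map_of Φ ((ordIrr_iff _).2 F.2))

/-- The order isomorphism on `Irrσ` induced by one on `Cσ`. -/
noncomputable def irrIso (Φ : Cσ P' ≃o Cσ Q') : Irrσ P' ≃o Irrσ Q' where
  toFun F := ⟨(Φ ⟨F.1, F.2.2.1⟩).1, irrClosed_of_cσ Φ F⟩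
  invFun G := ⟨(Φ.symm ⟨G.1, G.2.2.1⟩).1, irrClosed_of_cσ Φ.symm G⟩
  left_inv F := by
    apply Subtype.ext
    show (Φ.symm ⟨(Φ ⟨F.1, F.2.2.1⟩).1, _⟩).1 = F.1
    have : (⟨(Φ ⟨F.1, F.2.2.1⟩).1, (irrClosed_of_cσ Φ F).2.1⟩ : Cσ Q')
        = Φ ⟨F.1, F.2.2.1⟩ := Subtype.ext rfl
    rw [this, Φ.symm_apply_apply]
  right_inv G := by
    apply Subtype.ext
    show (Φ ⟨(Φ.symm ⟨G.1, G.2.2.1⟩).1, _⟩).1 = G.1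
    have : (⟨(Φ.symm ⟨G.1, G.2.2.1⟩).1, (irrClosed_of_cσ Φ.symm G).2.1⟩ : Cσ P')
        = Φ.symm ⟨G.1, G.2.2.1⟩ := Subtype.ext rfl
    rw [this, Φ.apply_symm_apply]
  map_rel_iff' {F G} := by
    show (Φ ⟨F.1, _⟩).1 ⊆ (Φ ⟨G.1, _⟩).1 ↔ F.1 ⊆ G.1
    exact Φ.le_iff_le

lemma irrIso_coe (Φ : Cσ P' ≃o Cσ Q') (F : Irrσ P') :
    (irrIso Φ F).1 = (Φ ⟨F.1, F.2.2.1⟩).1 := rfl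

/-- transfer of Scott closedness along an order isomorphism -/
lemma scottClosed_image (e : P' ≃o Q') {S : Set P'} (hS : ScottClosed S) :
    ScottClosed (e '' S) := by
  constructor
  · rintro a b hba ⟨s, hs, rfl⟩
    refine ⟨e.symm b, hS.1 ?_ hs, (e.apply_symm_apply b)⟩
    have : e.symm b ≤ e.symm (e s) := e.symm.monotone hba
    rwa [e.symm_apply_apply] at this
  · intro D hD hne hdir a ha
    have hD' : e.symm '' D ⊆ S := by
      rintro x ⟨d, hd, rfl⟩
      rcases hD hd with ⟨s, hs, rfl⟩
      rwa [e.symm_apply_apply]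
    have hne' : (e.symm '' D).Nonempty := hne.image _
    have hdir' : DirectedOn (· ≤ ·) (e.symm '' D) := by
      rintro x ⟨d₁, hd₁, rfl⟩ y ⟨d₂, hd₂, rfl⟩
      rcases hdir d₁ hd₁ d₂ hd₂ with ⟨z, hz, h₁, h₂⟩
      exact ⟨e.symm z, ⟨z, hz, rfl⟩, e.symm.monotone h₁, e.symm.monotone h₂⟩
    have hlub : IsLUB (e.symm '' D) (e.symm a) := by
      have := (e.symm.isLUB_image' (s := D) (x := a))
      exact this.2 ha
    have := hS.2 _ hD' hne' hdir' _ hlub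
    exact ⟨e.symm a, this, e.apply_symm_apply a⟩

lemma irrClosed_image (e : P' ≃o Q') {S : Set P'} (hS : IrrClosed S) :
    IrrClosed (e '' S) := by
  refine ⟨hS.1.image e, scottClosed_image e hS.2.1, ?_⟩
  intro F₁ F₂ h₁ h₂ hsub
  have hG₁ : ScottClosed (e.symm '' F₁) := scottClosed_image e.symm h₁
  have hG₂ : ScottClosed (e.symm '' F₂) := scottClosed_image e.symm h₂
  have hsub' : S ⊆ e.symm '' F₁ ∪ e.symm '' F₂ := by
    intro s hs
    rcases hsub ⟨s, hs, rfl⟩ with h | h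
    · exact Or.inl ⟨e s, h, e.symm_apply_apply s⟩
    · exact Or.inr ⟨e s, h, e.symm_apply_apply s⟩
  have himg : ∀ F : Set Q', e '' (e.symm '' F) = F := by
    intro F
    ext y; constructor
    · rintro ⟨x, ⟨z, hz, rfl⟩, rfl⟩; rwa [e.apply_symm_apply]
    · intro hy; exact ⟨e.symm y, ⟨y, hy, rfl⟩, e.apply_symm_apply y⟩
  rcases hS.2.2 _ _ hG₁ hG₂ hsub' with h | h
  · left; intro y hy
    rcases hy with ⟨s, hs, rfl⟩
    rcases h hs with ⟨z, hz, hzs⟩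
    rw [← hzs, e.apply_symm_apply]
    exact hz
  · right; intro y hy
    rcases hy with ⟨s, hs, rfl⟩
    rcases h hs with ⟨z, hz, hzs⟩
    rw [← hzs, e.apply_symm_apply]
    exact hz

lemma dcpo_of_iso (e : P' ≃o Q') (hP : Dcpo P') : Dcpo Q' := by
  intro D hne hdir
  have hne' : (e.symm '' D).Nonempty := hne.image _
  have hdir' : DirectedOn (· ≤ ·) (e.symm '' D) := by
    rintro x ⟨d₁, hd₁, rfl⟩ y ⟨d₂, hd₂, rfl⟩
    rcases hdir d₁ hd₁ d₂ hd₂ with ⟨z, hz, h₁, h₂⟩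
    exact ⟨e.symm z, ⟨z, hz, rfl⟩, e.symm.monotone h₁, e.symm.monotone h₂⟩
  rcases hP _ hne' hdir' with ⟨a, ha⟩
  refine ⟨e a, ?_⟩
  have himg : e '' (e.symm '' D) = D := by
    ext y; constructor
    · rintro ⟨x, ⟨z, hz, rfl⟩, rfl⟩; rwa [e.apply_symm_apply]
    · intro hy; exact ⟨e.symm y, ⟨y, hy, rfl⟩, e.apply_symm_apply y⟩
  have := (e.isLUB_image' (s := e.symm '' D) (x := a)).2 ha
  rwa [himg] at this

lemma downLinear_map (e : P' ≃o Q') {a : P'} (h : DownLinear a) : DownLinear (e a) := by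
  intro x hx y hy hxy
  have hx' : e.symm x ≤ a := by
    have := e.symm.monotone hx
    rwa [e.symm_apply_apply] at this
  have hy' : e.symm y ≤ a := by
    have := e.symm.monotone hy
    rwa [e.symm_apply_apply] at this
  have hne : e.symm x ≠ e.symm y := fun hc => hxy (e.symm.injective hc)
  rcases h hx' hy' hne with hc | hc
  · left
    have := e.monotone hc
    rwa [e.apply_symm_apply, e.apply_symm_apply] at this
  · right
    have := e.monotone hc
    rwa [e.apply_symm_apply, e.apply_symm_apply] at this

end Transfer

section Principal

variable {R : Type*} [PartialOrder R]

lemma principal_of_downLinear (hR : Dcpo R) (F : Irrσ R) (h : DownLinear F) :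
    ∃ x, F.1 = Set.Iic x := by
  have hchain : ∀ a ∈ F.1, ∀ b ∈ F.1, a ≤ b ∨ b ≤ a := by
    intro a ha b hb
    have hIa : (⟨Set.Iic a, irrClosed_Iic a⟩ : Irrσ R) ∈ Set.Iic F :=
      fun y (hy : y ≤ a) => F.2.2.1.1 hy ha
    have hIb : (⟨Set.Iic b, irrClosed_Iic b⟩ : Irrσ R) ∈ Set.Iic F :=
      fun y (hy : y ≤ b) => F.2.2.1.1 hy hb
    by_cases hab : a = b
    · exact Or.inl (le_of_eq hab)
    · have hne : (⟨Set.Iic a, irrClosed_Iic a⟩ : Irrσ R) ≠ ⟨Set.Iic b, irrClosed_Iic b⟩ := by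
        intro hc
        exact hab (Set.Iic_inj.1 (congrArg Subtype.val hc))
      rcases h hIa hIb hne with hc | hc
      · exact Or.inl (hc (le_refl a : a ∈ Set.Iic a))
      · exact Or.inr (hc (le_refl b : b ∈ Set.Iic b))
  have hdir : DirectedOn (· ≤ ·) F.1 := by
    intro a ha b hb
    rcases hchain a ha b hb with hc | hc
    · exact ⟨b, hb, hc, le_refl b⟩
    · exact ⟨a, ha, le_refl a, hc⟩
  rcases hR F.1 F.2.1 hdir with ⟨m, hm⟩
  have hmF : m ∈ F.1 := F.2.2.1.2 F.1 (fun x hx => hx) F.2.1 hdir m hm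
  refine ⟨m, Set.Subset.antisymm (fun x hx => hm.1 hx) (fun x hx => F.2.2.1.1 hx hmF)⟩

lemma principal_of_dirSup (hR : Dcpo R) {𝒟 : Set (Irrσ R)} (hne : 𝒟.Nonempty)
    (hdir : DirectedOn (· ≤ ·) 𝒟) (hp : ∀ G ∈ 𝒟, ∃ x, G.1 = Set.Iic x)
    {F : Irrσ R} (hF : IsLUB 𝒟 F) : ∃ x, F.1 = Set.Iic x := by
  set D : Set R := {x | ∃ G ∈ 𝒟, G.1 = Set.Iic x} with hD
  have hDne : D.Nonempty := by
    rcases hne with ⟨G, hG⟩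
    rcases hp G hG with ⟨x, hx⟩
    exact ⟨x, G, hG, hx⟩
  have hDdir : DirectedOn (· ≤ ·) D := by
    rintro x ⟨Gx, hGx, hGx'⟩ y ⟨Gy, hGy, hGy'⟩
    rcases hdir Gx hGx Gy hGy with ⟨H, hH, h₁, h₂⟩
    rcases hp H hH with ⟨z, hz⟩
    refine ⟨z, ⟨H, hH, hz⟩, ?_, ?_⟩
    · have : x ∈ H.1 := h₁ (by rw [hGx']; exact le_refl x)
      rwa [hz] at this
    · have : y ∈ H.1 := h₂ (by rw [hGy']; exact le_refl y)
      rwa [hz] at this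
  rcases hR D hDne hDdir with ⟨a, ha⟩
  have hlub : IsLUB 𝒟 (⟨Set.Iic a, irrClosed_Iic a⟩ : Irrσ R) := by
    constructor
    · intro G hG
      rcases hp G hG with ⟨x, hx⟩
      have hxa : x ≤ a := ha.1 ⟨G, hG, hx⟩
      show G.1 ⊆ Set.Iic a
      rw [hx]
      exact fun y hy => le_trans hy hxa
    · intro H hH
      show Set.Iic a ⊆ H.1
      have hDH : D ⊆ H.1 := by
        rintro x ⟨G, hG, hG'⟩
        have := hH hG
        exact this (by rw [hG']; exact le_refl x)
      have haH : a ∈ H.1 := H.2.2.1.2 D hDH hDne hDdir a ha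
      exact fun y hy => H.2.2.1.1 hy haH
  have := hF.unique hlub
  exact ⟨a, by rw [this]⟩

lemma proper_principal (hR : Dcpo R)
    (h : ∀ F : Irrσ R, (F : Set R) ≠ Set.univ →
      DownLinear F ∨ ∃ 𝒟 : Set (Irrσ R), 𝒟.Nonempty ∧ DirectedOn (· ≤ ·) 𝒟 ∧
        (∀ G ∈ 𝒟, DownLinear G) ∧ IsLUB 𝒟 F) :
    ∀ F : Irrσ R, F.1 ≠ Set.univ → ∃ x, F.1 = Set.Iic x := by
  intro F hF
  rcases h F hF with hdl | ⟨𝒟, hne, hdir, hdl, hlub⟩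
  · exact principal_of_downLinear hR F hdl
  · exact principal_of_dirSup hR hne hdir
      (fun G hG => principal_of_downLinear hR G (hdl G hG)) hlub

end Principal

section Gadget

variable {A B : Type*} [PartialOrder A] [PartialOrder B]

/-- the trivial subtype order isomorphism -/
def trueSubIso (A : Type*) [PartialOrder A] : {x : A // x = x} ≃o A where
  toFun x := x.1
  invFun a := ⟨a, rfl⟩
  left_inv x := rfl
  right_inv a := rfl
  map_rel_iff' := Iff.rfl

/-- The main gadget: an `Irrσ` isomorphism matching principal downsets over predicates
induces an order isomorphism of the corresponding subposets. -/
lemma iso_of_principal_corr (e : Irrσ A ≃o Irrσ B) (pA : A → Prop) (pB : B → Prop)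
    (h : ∀ F : Irrσ A, (∃ x, pA x ∧ F.1 = Set.Iic x) ↔ (∃ y, pB y ∧ (e F).1 = Set.Iic y)) :
    Nonempty ({x // pA x} ≃o {y // pB y}) := by
  classical
  -- forward choice
  have hf : ∀ x : {x // pA x}, ∃ y, pB y ∧
      (e ⟨Set.Iic x.1, irrClosed_Iic x.1⟩).1 = Set.Iic y :=
    fun x => (h ⟨Set.Iic x.1, irrClosed_Iic x.1⟩).1 ⟨x.1, x.2, rfl⟩
  have hg : ∀ y : {y // pB y}, ∃ x, pA x ∧
      (e.symm ⟨Set.Iic y.1, irrClosed_Iic y.1⟩).1 = Set.Iic x := by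
    intro y
    refine (h (e.symm ⟨Set.Iic y.1, irrClosed_Iic y.1⟩)).2 ⟨y.1, y.2, ?_⟩
    rw [e.apply_symm_apply]
  choose f hf1 hf2 using hf
  choose g hg1 hg2 using hg
  have key : ∀ x : {x // pA x},
      e ⟨Set.Iic x.1, irrClosed_Iic x.1⟩ = ⟨Set.Iic (f x), irrClosed_Iic (f x)⟩ :=
    fun x => Subtype.ext (hf2 x)
  have key' : ∀ y : {y // pB y},
      e.symm ⟨Set.Iic y.1, irrClosed_Iic y.1⟩ = ⟨Set.Iic (g y), irrClosed_Iic (g y)⟩ :=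
    fun y => Subtype.ext (hg2 y)
  have hgf : ∀ x : {x // pA x}, g ⟨f x, hf1 x⟩ = x.1 := by
    intro x
    have h1 := key' ⟨f x, hf1 x⟩
    rw [show (⟨Set.Iic (f x), irrClosed_Iic (f x)⟩ : Irrσ B)
          = e ⟨Set.Iic x.1, irrClosed_Iic x.1⟩ from (key x).symm,
        e.symm_apply_apply] at h1
    have := congrArg Subtype.val h1
    exact (Set.Iic_inj.1 this).symm
  have hfg : ∀ y : {y // pB y}, f ⟨g y, hg1 y⟩ = y.1 := by
    intro y
    have h1 := key ⟨g y, hg1 y⟩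
    rw [show (⟨Set.Iic (g y), irrClosed_Iic (g y)⟩ : Irrσ A)
          = e.symm ⟨Set.Iic y.1, irrClosed_Iic y.1⟩ from (key' y).symm,
        e.apply_symm_apply] at h1
    have := congrArg Subtype.val h1
    exact (Set.Iic_inj.1 this).symm
  refine ⟨{
    toFun := fun x => ⟨f x, hf1 x⟩
    invFun := fun y => ⟨g y, hg1 y⟩
    left_inv := fun x => Subtype.ext (hgf x)
    right_inv := fun y => Subtype.ext (hfg y)
    map_rel_iff' := ?_ }⟩
  intro x x'
  show (⟨f x, hf1 x⟩ : {y // pB y}) ≤ ⟨f x', hf1 x'⟩ ↔ x ≤ x'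
  have h1 : (⟨f x, hf1 x⟩ : {y // pB y}) ≤ ⟨f x', hf1 x'⟩ ↔ f x ≤ f x' := Iff.rfl
  have h2 : x ≤ x' ↔ x.1 ≤ x'.1 := Iff.rfl
  rw [h1, h2, ← Set.Iic_subset_Iic, ← Set.Iic_subset_Iic (a := x.1)]
  have e1 : (Set.Iic (f x) ⊆ Set.Iic (f x')) ↔
      (e ⟨Set.Iic x.1, irrClosed_Iic x.1⟩ ≤ e ⟨Set.Iic x'.1, irrClosed_Iic x'.1⟩) := by
    rw [key x, key x']; exact Iff.rfl
  rw [e1, e.le_iff_le]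
  exact Iff.rfl

end Gadget

section LemmaM

variable {R S : Type*} [PartialOrder R] [PartialOrder S]

/-- If `R` has a top element and `univ` is irreducible in `S`, then (under the
principality hypotheses) `S` also has a top element. -/
lemma univ_principal_transfer (hS : Dcpo S) (e : Irrσ R ≃o Irrσ S)
    (h1 : ∀ F : Irrσ R, F.1 ≠ Set.univ → ∃ x, F.1 = Set.Iic x)
    (h2 : ∀ G : Irrσ S, G.1 ≠ Set.univ → ∃ y, G.1 = Set.Iic y)
    {t : R} (ht : (Set.univ : Set R) = Set.Iic t)
    (hUS : IrrClosed (Set.univ : Set S)) :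
    ∃ u : S, (Set.univ : Set S) = Set.Iic u := by
  by_contra hcon
  push_neg at hcon
  have htop : ∀ x : R, x ≤ t := fun x => by
    have : x ∈ (Set.univ : Set R) := trivial
    rwa [ht] at this
  set UR : Irrσ R := ⟨Set.univ, ht ▸ irrClosed_Iic t⟩ with hUR
  set US : Irrσ S := ⟨Set.univ, hUS⟩ with hUS'
  have heUR : e UR = US := by
    have hmax : ∀ K : Irrσ S, K ≤ e UR := by
      intro K
      have : e.symm K ≤ UR := fun z _ => trivial
      have := e.monotone this
      rwa [e.apply_symm_apply] at this
    apply le_antisymm _ (hmax US)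
    exact fun z _ => trivial
  -- build θ : S ≃o {x : R // x ≠ t}
  have hcorr : ∀ G : Irrσ S, (∃ y, y = y ∧ G.1 = Set.Iic y) ↔
      (∃ x, x ≠ t ∧ (e.symm G).1 = Set.Iic x) := by
    intro G
    constructor
    · rintro ⟨y, -, hy⟩
      have hGne : G.1 ≠ Set.univ := by
        intro hc
        exact hcon y (by rw [← hc, hy])
      have hGne' : (e.symm G).1 ≠ Set.univ := by
        intro hc
        have : e.symm G = UR := Subtype.ext hc
        have : G = US := by
          have h3 := congrArg e this
          rwa [e.apply_symm_apply, heUR] at h3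
        exact hGne (congrArg Subtype.val this)
      rcases h1 (e.symm G) hGne' with ⟨x, hx⟩
      refine ⟨x, ?_, hx⟩
      intro hc
      rw [hc, ← ht] at hx
      exact hGne' hx
    · rintro ⟨x, hxt, hx⟩
      have hGne' : (e.symm G).1 ≠ Set.univ := by
        rw [hx, ht]
        intro hc
        exact hxt (Set.Iic_inj.1 hc)
      have hGne : G.1 ≠ Set.univ := by
        intro hc
        have : G = US := Subtype.ext hc
        rw [this, ← heUR, e.symm_apply_apply] at hGne'
        exact hGne' rfl
      rcases h2 G hGne with ⟨y, hy⟩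
      exact ⟨y, rfl, hy⟩
  rcases iso_of_principal_corr e.symm (fun y : S => y = y) (fun x : R => x ≠ t) hcorr
    with ⟨θ0⟩
  set θ : S ≃o {x : R // x ≠ t} := (trueSubIso S).symm.trans θ0 with hθ
  -- the subtype is a dcpo
  have hSubD : Dcpo {x : R // x ≠ t} := dcpo_of_iso θ hS
  -- lub coherence
  have hcoh : ∀ (D' : Set {x : R // x ≠ t}) (z : {x : R // x ≠ t}),
      IsLUB D' z → IsLUB (Subtype.val '' D') z.1 := by
    intro D' z hz
    constructor
    · rintro x ⟨d, hd, rfl⟩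
      exact hz.1 hd
    · intro w hw
      by_cases hwt : w = t
      · rw [hwt]; exact htop z.1
      · have : z ≤ ⟨w, hwt⟩ := hz.2 fun d hd => hw ⟨d, hd, rfl⟩
        exact this
  set Rt : Set R := {x | x ≠ t} with hRt
  -- lifting directed subsets of Rt
  have hlift : ∀ D : Set R, D ⊆ Rt → D.Nonempty → DirectedOn (· ≤ ·) D →
      ∃ z : {x : R // x ≠ t}, IsLUB D z.1 := by
    intro D hDRt hne hdir
    set D' : Set {x : R // x ≠ t} := {d | d.1 ∈ D} with hD'
    have hval : Subtype.val '' D' = D := by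
      ext x; constructor
      · rintro ⟨d, hd, rfl⟩; exact hd
      · intro hx; exact ⟨⟨x, hDRt hx⟩, hx, rfl⟩
    have hne' : D'.Nonempty := by
      rcases hne with ⟨d, hd⟩
      exact ⟨⟨d, hDRt hd⟩, hd⟩
    have hdir' : DirectedOn (· ≤ ·) D' := by
      intro c₁ h₁ c₂ h₂
      rcases hdir c₁.1 h₁ c₂.1 h₂ with ⟨z, hz, hz₁, hz₂⟩
      exact ⟨⟨z, hDRt hz⟩, hz, hz₁, hz₂⟩
    rcases hSubD D' hne' hdir' with ⟨z, hz⟩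
    refine ⟨z, ?_⟩
    have := hcoh D' z hz
    rwa [hval] at this
  have hRtSC : ScottClosed Rt := by
    constructor
    · intro a b hba ha
      intro hb
      rw [hb] at hba
      exact ha (le_antisymm (htop a) hba)
    · intro D hD hne hdir a ha
      rcases hlift D hD hne hdir with ⟨z, hz⟩
      have : a = z.1 := ha.unique hz
      rw [this]; exact z.2
  -- Rt is nonempty
  have hSne : (Set.univ : Set S).Nonempty := hUS.1
  have hRtne : Rt.Nonempty := by
    rcases hSne with ⟨y, -⟩
    exact ⟨(θ y).1, (θ y).2⟩
  -- Rt is irreducible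
  have hRtIrr : IrrClosed Rt := by
    refine ⟨hRtne, hRtSC, ?_⟩
    intro F₁ F₂ h₁ h₂ hsub
    set A₁ : Set {x : R // x ≠ t} := {d | d.1 ∈ F₁} with hA₁
    set A₂ : Set {x : R // x ≠ t} := {d | d.1 ∈ F₂} with hA₂
    have hASC : ∀ (F : Set R), ScottClosed F →
        ScottClosed ({d : {x : R // x ≠ t} | d.1 ∈ F}) := by
      intro F hF
      constructor
      · intro c d hdc hc
        exact hF.1 hdc hc
      · intro D' hD' hne' hdir' z hz
        have hlub := hcoh D' z hz
        have himg : Subtype.val '' D' ⊆ F := by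
          rintro x ⟨d, hd, rfl⟩; exact hD' hd
        have hne'' : (Subtype.val '' D').Nonempty := hne'.image _
        have hdir'' : DirectedOn (· ≤ ·) (Subtype.val '' D') := by
          rintro x ⟨d₁, hd₁, rfl⟩ y ⟨d₂, hd₂, rfl⟩
          rcases hdir' d₁ hd₁ d₂ hd₂ with ⟨c, hc, hc₁, hc₂⟩
          exact ⟨c.1, ⟨c, hc, rfl⟩, hc₁, hc₂⟩
        exact hF.2 _ himg hne'' hdir'' z.1 hlub
    have hB₁ : ScottClosed (θ.symm '' A₁) := scottClosed_image θ.symm (hASC F₁ h₁)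
    have hB₂ : ScottClosed (θ.symm '' A₂) := scottClosed_image θ.symm (hASC F₂ h₂)
    have hcover : (Set.univ : Set S) ⊆ θ.symm '' A₁ ∪ θ.symm '' A₂ := by
      intro y _
      have : (θ y).1 ∈ Rt := (θ y).2
      rcases hsub this with hy | hy
      · exact Or.inl ⟨θ y, hy, θ.symm_apply_apply y⟩
      · exact Or.inr ⟨θ y, hy, θ.symm_apply_apply y⟩
    have hback : ∀ (F : Set R) (hFA : Set R → Prop),
        (Set.univ : Set S) ⊆ θ.symm '' {d : {x : R // x ≠ t} | d.1 ∈ F} → Rt ⊆ F := by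
      intro F _ hcov x hx
      have := hcov (a := θ.symm ⟨x, hx⟩) trivial
      rcases this with ⟨d, hd, hd'⟩
      have : d = ⟨x, hx⟩ := θ.symm.injective hd'
      rw [this] at hd
      exact hd
    rcases hUS.2.2 _ _ hB₁ hB₂ hcover with h | h
    · exact Or.inl (hback F₁ (fun _ => True) h)
    · exact Or.inr (hback F₂ (fun _ => True) h)
  -- Rt is a proper irreducible closed set, hence principal
  have hRtproper : Rt ≠ Set.univ := by
    intro hc
    have : t ∈ Rt := by rw [hc]; trivial
    exact this rfl
  rcases h1 ⟨Rt, hRtIrr⟩ hRtproper with ⟨z, hz0⟩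
  have hz : Rt = Set.Iic z := hz0
  have hzRt : z ∈ Rt := by rw [hz]; exact le_refl z
  -- z is the top of the subtype, so S has a top
  set u : S := θ.symm ⟨z, hzRt⟩ with hu
  have hutop : ∀ y : S, y ≤ u := by
    intro y
    have h1' : (θ y).1 ∈ Rt := (θ y).2
    rw [hz] at h1'
    have : θ y ≤ ⟨z, hzRt⟩ := h1'
    have h2' := θ.symm.monotone this
    rwa [θ.symm_apply_apply] at h2'
  refine hcon u ?_
  ext y
  simp only [Set.mem_univ, true_iff, Set.mem_Iic]
  exact hutop y

end LemmaM

end Aux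

/-- a dcpo in which every proper nonempty irreducible Scott closed set is
either a down-linear element of `Irr_σ(P)`, or the supremum in `Irr_σ(P)` of a directed
family of down-linear elements, is `C_σ`-unique. -/
theorem stmt7 {P : Type*} [PartialOrder P] (hP : Dcpo P)
    (hDL : ∀ F : Irrσ P, (F : Set P) ≠ Set.univ →
      DownLinear F ∨ ∃ 𝒟 : Set (Irrσ P), 𝒟.Nonempty ∧ DirectedOn (· ≤ ·) 𝒟 ∧
        (∀ G ∈ 𝒟, DownLinear G) ∧ IsLUB 𝒟 F) :
    CσUnique P := by
  intro Q instQ hQdc hiso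
  obtain ⟨Φ⟩ := hiso
  classical
  set ι : Irrσ P ≃o Irrσ Q := irrIso Φ with hι
  have hP1 : ∀ F : Irrσ P, F.1 ≠ Set.univ → ∃ x, F.1 = Set.Iic x :=
    proper_principal hP hDL
  -- the top of `Cσ` is preserved
  have hTop : (Φ ⟨Set.univ, scottClosed_univ⟩).1 = Set.univ := by
    have h0 : Φ.symm ⟨Set.univ, scottClosed_univ⟩ ≤ ⟨Set.univ, scottClosed_univ⟩ :=
      fun z _ => trivial
    have h1 := Φ.monotone h0
    rw [Φ.apply_symm_apply] at h1
    exact Set.eq_univ_of_univ_subset h1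
  have hTopEq : Φ ⟨Set.univ, scottClosed_univ⟩ = ⟨Set.univ, scottClosed_univ⟩ :=
    Subtype.ext hTop
  have hTopEq' : Φ.symm ⟨Set.univ, scottClosed_univ⟩ = ⟨Set.univ, scottClosed_univ⟩ := by
    rw [← hTopEq, Φ.symm_apply_apply]
  -- irreducibility of `univ` transfers
  have hUiff : IrrClosed (Set.univ : Set P) ↔ IrrClosed (Set.univ : Set Q) := by
    constructor
    · intro h
      have h2 := ordIrr_map_of Φ ((ordIrr_iff ⟨Set.univ, scottClosed_univ⟩).2 h)
      rw [hTopEq] at h2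
      exact (ordIrr_iff _).1 h2
    · intro h
      have h2 := ordIrr_map_of Φ.symm ((ordIrr_iff ⟨Set.univ, scottClosed_univ⟩).2 h)
      rw [hTopEq'] at h2
      exact (ordIrr_iff _).1 h2
  -- transfer the down-linearity hypothesis to Q
  have hDLQ : ∀ G : Irrσ Q, (G : Set Q) ≠ Set.univ →
      DownLinear G ∨ ∃ 𝒟 : Set (Irrσ Q), 𝒟.Nonempty ∧ DirectedOn (· ≤ ·) 𝒟 ∧
        (∀ H ∈ 𝒟, DownLinear H) ∧ IsLUB 𝒟 G := by
    intro G hG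
    have hF : (ι.symm G).1 ≠ Set.univ := by
      intro hc
      have hUP : IrrClosed (Set.univ : Set P) := hc ▸ (ι.symm G).2
      have hUQ := hUiff.1 hUP
      have hmax : ∀ H : Irrσ Q, H ≤ G := by
        intro H
        have h0 : ι.symm H ≤ ι.symm G := by
          show (ι.symm H).1 ⊆ (ι.symm G).1
          rw [hc]; exact Set.subset_univ _
        have h1 := ι.monotone h0
        rwa [ι.apply_symm_apply, ι.apply_symm_apply] at h1
      have : (Set.univ : Set Q) ⊆ G.1 := hmax ⟨Set.univ, hUQ⟩
      exact hG (Set.eq_univ_of_univ_subset this)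
    rcases hDL (ι.symm G) hF with hdl | ⟨𝒟, hne, hdir, hdl, hlub⟩
    · left
      have := downLinear_map ι hdl
      rwa [ι.apply_symm_apply] at this
    · right
      refine ⟨ι '' 𝒟, hne.image _, ?_, ?_, ?_⟩
      · rintro x ⟨K₁, hK₁, rfl⟩ y ⟨K₂, hK₂, rfl⟩
        rcases hdir K₁ hK₁ K₂ hK₂ with ⟨K, hK, h₁, h₂⟩
        exact ⟨ι K, ⟨K, hK, rfl⟩, ι.monotone h₁, ι.monotone h₂⟩
      · rintro H ⟨K, hK, rfl⟩
        exact downLinear_map ι (hdl K hK)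
      · have := (ι.isLUB_image' (s := 𝒟) (x := ι.symm G)).2 hlub
        rwa [ι.apply_symm_apply] at this
  have hQ1 : ∀ G : Irrσ Q, G.1 ≠ Set.univ → ∃ y, G.1 = Set.Iic y :=
    proper_principal hQdc hDLQ
  -- the principal correspondence
  have hcorrMain : ∀ F : Irrσ P, (∃ x, x = x ∧ F.1 = Set.Iic x) ↔
      (∃ y, y = y ∧ (ι F).1 = Set.Iic y) := by
    intro F
    constructor
    · rintro ⟨x, -, hx⟩
      by_cases hG : (ι F).1 = Set.univ
      · have hUQ : IrrClosed (Set.univ : Set Q) := hG ▸ (ι F).2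
        have hUP : IrrClosed (Set.univ : Set P) := hUiff.2 hUQ
        have hFuniv : F.1 = Set.univ := by
          have h0 : ι (⟨Set.univ, hUP⟩ : Irrσ P) ≤ ι F := by
            show (ι ⟨Set.univ, hUP⟩).1 ⊆ (ι F).1
            rw [hG]; exact Set.subset_univ _
          have h1 : (⟨Set.univ, hUP⟩ : Irrσ P) ≤ F := ι.le_iff_le.1 h0
          exact Set.eq_univ_of_univ_subset h1
        have ht : (Set.univ : Set P) = Set.Iic x := by rw [← hFuniv, hx]
        rcases univ_principal_transfer hQdc ι hP1 hQ1 ht hUQ with ⟨u, hu⟩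
        exact ⟨u, rfl, by rw [hG, hu]⟩
      · rcases hQ1 (ι F) hG with ⟨y, hy⟩
        exact ⟨y, rfl, hy⟩
    · rintro ⟨y, -, hy⟩
      by_cases hF : F.1 = Set.univ
      · have hUP : IrrClosed (Set.univ : Set P) := hF ▸ F.2
        have hUQ : IrrClosed (Set.univ : Set Q) := hUiff.1 hUP
        have hGuniv : (ι F).1 = Set.univ := by
          have h0 : ι.symm (⟨Set.univ, hUQ⟩ : Irrσ Q) ≤ F := by
            show (ι.symm ⟨Set.univ, hUQ⟩).1 ⊆ F.1
            rw [hF]; exact Set.subset_univ _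
          have h1 := ι.monotone h0
          rw [ι.apply_symm_apply] at h1
          exact Set.eq_univ_of_univ_subset h1
        have ht : (Set.univ : Set Q) = Set.Iic y := by rw [← hGuniv, hy]
        rcases univ_principal_transfer hP ι.symm hQ1 hP1 ht hUP with ⟨u, hu⟩
        exact ⟨u, rfl, by rw [hF, hu]⟩
      · rcases hP1 F hF with ⟨x, hx⟩
        exact ⟨x, rfl, hx⟩
  rcases iso_of_principal_corr ι (fun x : P => x = x) (fun y : Q => y = y) hcorrMain
    with ⟨ψ⟩
  exact ⟨((trueSubIso P).symm.trans ψ).trans (trueSubIso Q)⟩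
end

section
/- In Johnstone's dcpo X = ℕ × (ℕ ∪ {∞}), for each m ∈ ℕ the principal downset ↓(m,∞) is the supremum in Irr_σ(X) of the chain {↓(m,k) : k ∈ ℕ}, and each ↓(m,k) with k ∈ ℕ is a down-linear element of Irr_σ(X). -/
/-- The carrier of Johnstone's dcpo: `ℕ × (ℕ ∪ {∞})`. -/
structure J where
  m : ℕ
  n : WithTop ℕ

/-- Johnstone's order: `(m,n) ≤ (m',n')` iff `m = m' ∧ n ≤ n'`, or `n' = ∞ ∧ n ≤ m'`. -/
instance : PartialOrder J where
  le p q := (p.m = q.m ∧ p.n ≤ q.n) ∨ (q.n = ⊤ ∧ p.n ≤ (q.m : WithTop ℕ))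
  le_refl p := Or.inl ⟨rfl, le_refl _⟩
  le_trans p q r hpq hqr := by
    rcases hpq with ⟨h1, h2⟩ | ⟨h1, h2⟩ <;> rcases hqr with ⟨h3, h4⟩ | ⟨h3, h4⟩
    · exact Or.inl ⟨h1.trans h3, h2.trans h4⟩
    · exact Or.inr ⟨h3, h2.trans h4⟩
    · exact Or.inr ⟨top_le_iff.mp (h1 ▸ h4), h3 ▸ h2⟩
    · exact absurd (h1 ▸ h4) (not_le.mpr (WithTop.coe_lt_top r.m))
  le_antisymm p q hpq hqp := by
    obtain ⟨pm, pn⟩ := p; obtain ⟨qm, qn⟩ := q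
    rcases hpq with ⟨h1, h2⟩ | ⟨h1, h2⟩ <;> rcases hqp with ⟨h3, h4⟩ | ⟨h3, h4⟩
    · simp only [J.mk.injEq]
      exact ⟨h1, le_antisymm h2 h4⟩
    · have hq : qn = ⊤ := top_le_iff.mp ((show pn = ⊤ from h3) ▸ h2)
      exact absurd (hq ▸ h4) (not_le.mpr (WithTop.coe_lt_top pm))
    · have hp : pn = ⊤ := top_le_iff.mp ((show qn = ⊤ from h1) ▸ h4)
      exact absurd (hp ▸ h2) (not_le.mpr (WithTop.coe_lt_top qm))
    · exact absurd ((show qn = ⊤ from h1) ▸ h4) (not_le.mpr (WithTop.coe_lt_top pm))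

lemma scottClosed_Iic_s9 {P : Type*} [PartialOrder P] (a : P) : ScottClosed (Set.Iic a) := by
  refine ⟨fun x y h hx => h.trans hx, fun D hD _ _ b hb => hb.2 (fun x hx => hD hx)⟩

lemma irrClosed_Iic_s9 {P : Type*} [PartialOrder P] (a : P) : IrrClosed (Set.Iic a) := by
  refine ⟨⟨a, le_refl a⟩, scottClosed_Iic_s9 a, fun F₁ F₂ h₁ h₂ hsub => ?_⟩
  rcases hsub (le_refl a) with h | h
  · exact Or.inl fun x hx => h₁.1 hx h
  · exact Or.inr fun x hx => h₂.1 hx h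

lemma le_fin {m k : ℕ} {p : J} (h : p ≤ J.mk m (k : WithTop ℕ)) :
    p.m = m ∧ p.n ≤ (k : WithTop ℕ) := by
  rcases h with ⟨h1, h2⟩ | ⟨h1, h2⟩
  · exact ⟨h1, h2⟩
  · exact absurd h1 (by simp)

lemma chain_Iic (m k : ℕ) : IsChain (· ≤ ·) (Set.Iic (J.mk m (k : WithTop ℕ))) := by
  intro p hp q hq _
  obtain ⟨hp1, _⟩ := le_fin hp
  obtain ⟨hq1, _⟩ := le_fin hq
  rcases le_total p.n q.n with h | h
  · exact Or.inl (Or.inl ⟨hp1.trans hq1.symm, h⟩)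
  · exact Or.inr (Or.inl ⟨hq1.trans hp1.symm, h⟩)

/-- in Johnstone's dcpo, for each `m`, every `↓(m,k)` (`k ∈ ℕ`) is a
down-linear element of `Irr_σ(J)`, the family `{↓(m,k) : k ∈ ℕ}` is a chain, and
`↓(m,∞)` is its supremum in `Irr_σ(J)`. -/
theorem stmt9 (m : ℕ) :
    (∀ k : ℕ, IrrClosed (Set.Iic (J.mk m k))) ∧
    (∀ k : ℕ, IsChain (· ⊆ ·) {B : Set J | IrrClosed B ∧ B ⊆ Set.Iic (J.mk m k)}) ∧
    IsChain (· ⊆ ·) {A : Set J | ∃ k : ℕ, A = Set.Iic (J.mk m k)} ∧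
    IrrClosed (Set.Iic (J.mk m ⊤)) ∧
    (∀ k : ℕ, Set.Iic (J.mk m k) ⊆ Set.Iic (J.mk m ⊤)) ∧
    (∀ B : Set J, IrrClosed B → (∀ k : ℕ, Set.Iic (J.mk m k) ⊆ B) →
      Set.Iic (J.mk m ⊤) ⊆ B) := by
  refine ⟨fun k => irrClosed_Iic_s9 _, fun k B₁ h₁ B₂ h₂ _ => ?_, ?_, irrClosed_Iic_s9 _,
    fun k p hp => hp.trans (show J.mk m (k: WithTop ℕ) ≤ J.mk m ⊤ from Or.inl ⟨rfl, le_top⟩), fun B hB hall => ?_⟩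
  · by_contra hcon
    obtain ⟨hnot12, hnot21⟩ := not_or.mp hcon
    obtain ⟨x, hx1, hx2⟩ := Set.not_subset.mp hnot12
    obtain ⟨y, hy2, hy1⟩ := Set.not_subset.mp hnot21
    rcases (chain_Iic m k) (h₁.2 hx1) (h₂.2 hy2) (fun h => hy1 (h ▸ hx1)) with h | h
    · exact hx2 (h₂.1.2.1.1 h hy2)
    · exact hy1 (h₁.1.2.1.1 h hx1)
  · rintro A ⟨k, rfl⟩ A' ⟨k', rfl⟩ _
    rcases le_total k k' with h | h
    · exact Or.inl fun p hp => hp.trans (show J.mk m (k : WithTop ℕ) ≤ J.mk m (k' : WithTop ℕ)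
        from Or.inl ⟨rfl, show (k : WithTop ℕ) ≤ (k' : WithTop ℕ) by exact_mod_cast h⟩)
    · exact Or.inr fun p hp => hp.trans (show J.mk m (k' : WithTop ℕ) ≤ J.mk m (k : WithTop ℕ)
        from Or.inl ⟨rfl, show (k' : WithTop ℕ) ≤ (k : WithTop ℕ) by exact_mod_cast h⟩)
  · -- B contains the chain D = {(m,k)}, directed with lub (m,⊤)
    set D : Set J := Set.range (fun k : ℕ => J.mk m (k : WithTop ℕ)) with hD
    have hDB : D ⊆ B := by
      rintro _ ⟨k, rfl⟩
      exact hall k (show J.mk m (k : WithTop ℕ) ≤ J.mk m (k : WithTop ℕ) from le_refl _)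
    have hDdir : DirectedOn (· ≤ ·) D := by
      rintro _ ⟨k, rfl⟩ _ ⟨k', rfl⟩
      refine ⟨J.mk m ((max k k' : ℕ) : WithTop ℕ), ⟨max k k', rfl⟩, ?_, ?_⟩
      · exact show J.mk m (k : WithTop ℕ) ≤ _ from
          Or.inl ⟨rfl, by show (k : WithTop ℕ) ≤ ((max k k' : ℕ) : WithTop ℕ); exact_mod_cast le_max_left k k'⟩
      · exact show J.mk m (k' : WithTop ℕ) ≤ _ from
          Or.inl ⟨rfl, by show (k' : WithTop ℕ) ≤ ((max k k' : ℕ) : WithTop ℕ); exact_mod_cast le_max_right k k'⟩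
    have hlub : IsLUB D (J.mk m ⊤) := by
      constructor
      · rintro _ ⟨k, rfl⟩
        exact Or.inl ⟨rfl, le_top⟩
      · rintro q hq
        have hqn : q.n = ⊤ := by
          by_contra hqn
          obtain ⟨j, hj⟩ := WithTop.ne_top_iff_exists.mp hqn
          have h : J.mk m ((j + 1 : ℕ) : WithTop ℕ) ≤ q := hq (Set.mem_range_self (j + 1))
          rcases h with ⟨_, h2⟩ | ⟨h1, _⟩
          · have h2' : ((j + 1 : ℕ) : WithTop ℕ) ≤ q.n := h2
            rw [← hj] at h2'
            have hlt : (j : WithTop ℕ) + 1 ≤ (j : WithTop ℕ) := by simpa using h2'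
            exact absurd hlt (by exact_mod_cast Nat.not_succ_le_self j)
          · exact hqn h1
        have hqm : q.m = m := by
          by_contra hqm
          have h : J.mk m ((q.m + 1 : ℕ) : WithTop ℕ) ≤ q := hq (Set.mem_range_self (q.m + 1))
          rcases h with ⟨h1, _⟩ | ⟨_, h2⟩
          · exact hqm h1.symm
          · have h2' : ((q.m + 1 : ℕ) : WithTop ℕ) ≤ (q.m : ℕ) := h2
            have : q.m + 1 ≤ q.m := by exact_mod_cast h2'
            omega
        exact Or.inl ⟨hqm.symm, hqn ▸ le_refl _⟩
    have hmem : J.mk m ⊤ ∈ B :=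
      hB.2.1.2 D hDB ⟨_, Set.mem_range_self 0⟩ hDdir _ hlub
    exact fun p hp => hB.2.1.1 hp hmem
end

section
/- For any dcpo P, every C-compact element of the complete lattice C_σ(P) of Scott closed subsets of P is an irreducible Scott closed set (i.e., belongs to Irr_σ(P) or is empty, and if nonempty it is irreducible). -/
/-- A Scott closed set `A` is a C-compact element of the complete lattice `C_σ(P)`:
for every nonempty Scott closed subset `S` of `C_σ(P)` with supremum `M`, `A ≤ M`
implies `A ∈ S`. -/
def CCompactIn {P : Type*} [PartialOrder P] (A : Cσ P) : Prop :=
  ∀ S : Set (Cσ P), S.Nonempty → ScottClosed S → ∀ M, IsLUB S M → A ≤ M → A ∈ S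

section Aux

variable {P : Type*} [PartialOrder P]

lemma sc_empty : ScottClosed (∅ : Set P) :=
  ⟨fun _ _ _ h => h, fun _ hD hne _ _ _ => absurd (hne.mono hD) (by simp)⟩

lemma sc_sInter {𝒞 : Set (Set P)} (h : ∀ F ∈ 𝒞, ScottClosed F) : ScottClosed (⋂₀ 𝒞) := by
  constructor
  · intro a b hle ha F hF
    exact (h F hF).1 hle (ha F hF)
  · intro D hD hne hdir a hlub F hF
    exact (h F hF).2 D (fun d hd => hD hd F hF) hne hdir a hlub

/-- Scott closure. -/
def scl (X : Set P) : Set P := ⋂₀ {F | ScottClosed F ∧ X ⊆ F}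

lemma scl_closed (X : Set P) : ScottClosed (scl X) :=
  sc_sInter (fun _ hF => hF.1)

lemma subset_scl (X : Set P) : X ⊆ scl X :=
  fun x hx F hF => hF.2 hx

lemma scl_min {X F : Set P} (hF : ScottClosed F) (hXF : X ⊆ F) : scl X ⊆ F :=
  fun x hx => hx F ⟨hF, hXF⟩

lemma sc_Iic (x : P) : ScottClosed (Set.Iic x) := by
  constructor
  · intro a b hle ha
    exact le_trans hle ha
  · intro D hD hne hdir a hlub
    exact hlub.2 (fun d hd => hD hd)

end Aux

/-- every C-compact element of `C_σ(P)` is empty or irreducible. -/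
theorem stmt12 {P : Type*} [PartialOrder P] (hP : Dcpo P)
    (A : Cσ P) (hA : CCompactIn A) :
    (A : Set P) = ∅ ∨ IrrClosed (A : Set P) := by
  by_cases hemp : (A : Set P) = ∅
  · exact Or.inl hemp
  right
  refine ⟨Set.nonempty_iff_ne_empty.2 hemp, A.2, ?_⟩
  intro F₁ F₂ hF₁ hF₂ hsub
  set S : Set (Cσ P) := {B | (B : Set P) ⊆ F₁ ∨ (B : Set P) ⊆ F₂} with hS
  have hSne : S.Nonempty := ⟨⟨∅, sc_empty⟩, Or.inl (Set.empty_subset _)⟩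
  have hSclosed : ScottClosed S := by
    constructor
    · intro B B' hle hB
      exact hB.imp (fun h => le_trans hle h) (fun h => le_trans hle h)
    · intro D hD hne hdir a hlub
      -- cofinality argument
      have key : (∀ d ∈ D, ∃ e ∈ D, d ≤ e ∧ (e : Set P) ⊆ F₁) ∨
                 (∀ d ∈ D, ∃ e ∈ D, d ≤ e ∧ (e : Set P) ⊆ F₂) := by
        by_contra hc
        push_neg at hc
        obtain ⟨⟨d₁, hd₁, h₁⟩, ⟨d₂, hd₂, h₂⟩⟩ := hc
        obtain ⟨e, he, he₁, he₂⟩ := hdir d₁ hd₁ d₂ hd₂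
        rcases hD he with h | h
        · exact h₁ e he he₁ h
        · exact h₂ e he he₂ h
      have main : ∀ F : Set P, ScottClosed F →
          (∀ d ∈ D, ∃ e ∈ D, d ≤ e ∧ (e : Set P) ⊆ F) → (a : Set P) ⊆ F := by
        intro F hF hcof
        set U : Set P := ⋃ e ∈ {e ∈ D | (e : Set P) ⊆ F}, (e : Set P) with hU
        have hUF : U ⊆ F := by
          intro x hx
          simp only [hU, Set.mem_iUnion] at hx
          obtain ⟨e, ⟨_, heF⟩, hx⟩ := hx
          exact heF hx
        have hNub : (⟨scl U, scl_closed U⟩ : Cσ P) ∈ upperBounds D := by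
          intro d hd
          obtain ⟨e, he, hde, heF⟩ := hcof d hd
          refine le_trans (α := Set P) hde ?_
          refine le_trans ?_ (subset_scl U)
          intro x hx
          simp only [hU, Set.mem_iUnion]
          exact ⟨e, ⟨he, heF⟩, hx⟩
        have := hlub.2 hNub
        exact le_trans this (scl_min hF hUF)
      rcases key with h | h
      · exact Or.inl (main F₁ hF₁ h)
      · exact Or.inr (main F₂ hF₂ h)
  set M : Cσ P := ⟨scl (⋃ B ∈ S, (B : Set P)), scl_closed _⟩ with hM
  have hlub : IsLUB S M := by
    constructor
    · intro B hB
      show (B : Set P) ⊆ scl (⋃ B ∈ S, (B : Set P))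
      refine subset_trans ?_ (subset_scl _)
      intro x hx
      simp only [Set.mem_iUnion]
      exact ⟨B, hB, hx⟩
    · intro N hN
      refine scl_min N.2 ?_
      intro x hx
      simp only [Set.mem_iUnion] at hx
      obtain ⟨B, hB, hx⟩ := hx
      exact hN hB hx
  have hAM : A ≤ M := by
    intro x hx
    have hIic : (⟨Set.Iic x, sc_Iic x⟩ : Cσ P) ∈ S := by
      rcases hsub hx with h | h
      · exact Or.inl (fun y hy => hF₁.1 hy h)
      · exact Or.inr (fun y hy => hF₂.1 hy h)
    refine subset_scl _ ?_
    simp only [Set.mem_iUnion]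
    exact ⟨_, hIic, le_refl x⟩
  exact hA S hSne hSclosed M hlub hAM
end
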